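/- Let V be a finite-dimensional vector space over an infinite field k of characteristic ≠ 2, s a reflection, R the polynomial ring on V graded with V* in degree 2, R^s the invariants, α a degree-2 equation of the reflecting hyperplane. Then the map R[2] → Hom_{R^s}(R, R^s) sending 1 ↦ α* and α ↦ 1* (where {1*, α*} is the basis dual to the R^s-basis {1, α} of R) is an isomorphism of graded R-modules. Consequently, the functors M ↦ R[2] ⊗_{R^s} M and M ↦ Hom_{R^s}(R, M) from graded R^s-modules to graded R-modules are naturally isomorphic. -/

import Mathlib

set_option synthInstance.maxHeartbeats 1000000
set_option maxHeartbeats 4000000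
noncomputable section

/-- The algebra of polynomial (regular) functions on a vector space `V`:
the subalgebra of `V → k` generated by the linear forms. -/
def PolyFun (k V : Type*) [CommRing k] [AddCommGroup V] [Module k V] :
    Subalgebra k (V → k) :=
  Algebra.adjoin k (Set.range fun φ : Module.Dual k V => ⇑φ)

/-- Restriction of functions to a subset `X`, as an algebra homomorphism. -/
def restrictAlgHom (k : Type*) {V : Type*} [CommRing k] (X : Set V) :
    (V → k) →ₐ[k] (X → k) where
  toFun f x := f x
  map_one' := rfl
  map_mul' _ _ := rfl
  map_zero' := rfl
  map_add' _ _ := rfl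
  commutes' _ := rfl

/-- The algebra of regular functions on a subset `X ⊆ V`: restrictions of
polynomial functions. -/
def RegFun (k : Type*) {V : Type*} [CommRing k] [AddCommGroup V] [Module k V]
    (X : Set V) : Subalgebra k (X → k) :=
  (PolyFun k V).map (restrictAlgHom k X)

/-- The subalgebra of polynomial functions invariant under `s : V → V`. -/
def InvPolyFun (k : Type*) {V : Type*} [CommRing k] [AddCommGroup V] [Module k V]
    (s : V → V) : Subalgebra k (V → k) where
  carrier := {f | f ∈ PolyFun k V ∧ ∀ v, f (s v) = f v}
  mul_mem' := fun ha hb => ⟨mul_mem ha.1 hb.1, fun v => by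
    simp only [Pi.mul_apply, ha.2 v, hb.2 v]⟩
  add_mem' := fun ha hb => ⟨add_mem ha.1 hb.1, fun v => by
    simp only [Pi.add_apply, ha.2 v, hb.2 v]⟩
  algebraMap_mem' := fun r => ⟨Subalgebra.algebraMap_mem _ r, fun _ => rfl⟩

theorem invPolyFun_le (k : Type*) {V : Type*} [CommRing k] [AddCommGroup V]
    [Module k V] (s : V → V) : InvPolyFun k s ≤ PolyFun k V :=
  fun _ hf => hf.1

/-- `R` is a module over its subring `R^s` of `s`-invariants. -/
noncomputable instance instModInvPolyFun (k : Type*) {V : Type*} [CommRing k]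
    [AddCommGroup V] [Module k V] (s : V → V) :
    Module ↥(InvPolyFun k s) ↥(PolyFun k V) :=
  ((Subalgebra.inclusion (invPolyFun_le k s)).toRingHom).toModule

instance (k : Type*) {V : Type*} [CommRing k] [AddCommGroup V] [Module k V]
    (s : V → V) :
    SMulCommClass ↥(InvPolyFun k s) ↥(PolyFun k V) ↥(PolyFun k V) :=
  ⟨fun g p f => mul_left_comm (Subalgebra.inclusion (invPolyFun_le k s) g) p f⟩

/-- A function on `V` is homogeneous of degree `m` (in the natural grading,
which is half of the grading of the paper, where `V*` sits in degree `2`). -/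
def IsHomogeneousFun {k V : Type*} [CommRing k] [AddCommGroup V] [Module k V]
    (f : V → k) (m : ℕ) : Prop :=
  ∀ (c : k) (v : V), f (c • v) = c ^ m * f v

set_option maxHeartbeats 40000000

open TensorProduct in
/-- With `R` the polynomial functions on `V`, `s` a reflection
with associated linear form `β` (so `R` is free over `R^s` with basis
`{1, β}`), the `R^s`-linear map `Φ : R → Hom_{R^s}(R, R^s)` sending `1 ↦ β*`
and `β ↦ 1*` (dual basis) is an isomorphism, and it intertwines
multiplication: `Φ(p·q)(x) = Φ(q)(p·x)` (i.e. it is `R`-linear, `R` acting on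
`Hom_{R^s}(R, R^s)` by `(r·f)(x) = f(rx)`); consequently for every
`R^s`-module `M` the canonical map `R ⊗_{R^s} M → Hom_{R^s}(R, M)` obtained
from `Φ` and `dualTensorHom` is bijective, i.e. the functors
`M ↦ R[2] ⊗_{R^s} M` and `M ↦ Hom_{R^s}(R, M)` are naturally isomorphic. -/
theorem polyFun_dual_iso_and_hom_tensor_equiv
    {k V : Type*} [Field k] [Infinite k] (hchar : (2 : k) ≠ 0)
    [AddCommGroup V] [Module k V] [FiniteDimensional k V]
    (s : V ≃ₗ[k] V) (hs : ∀ v, s (s v) = v)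
    (β : Module.Dual k V) (hβ : β ≠ 0)
    (hker : ∀ v, β v = 0 ↔ s v = v)
    (hsβ : ∀ v, β (s v) = - β v)
    (b : Module.Basis (Fin 2) ↥(InvPolyFun k ⇑s) ↥(PolyFun k V))
    (hb0 : b 0 = 1)
    (hb1 : b 1 = (⟨⇑β, Algebra.subset_adjoin ⟨β, rfl⟩⟩ : ↥(PolyFun k V))) :
    ∀ Φ : ↥(PolyFun k V) →ₗ[↥(InvPolyFun k ⇑s)]
        Module.Dual ↥(InvPolyFun k ⇑s) ↥(PolyFun k V),
      Φ (b 0) = b.dualBasis 1 → Φ (b 1) = b.dualBasis 0 →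
      Function.Bijective Φ ∧
      (∀ p q x : ↥(PolyFun k V), Φ (p * q) x = Φ q (p * x)) ∧
      (∀ (M : Type) [AddCommGroup M] [Module ↥(InvPolyFun k ⇑s) M],
        Function.Bijective
          ((dualTensorHom ↥(InvPolyFun k ⇑s) ↥(PolyFun k V) M) ∘ₗ
            (LinearMap.rTensor M Φ))) := by
  intro Φ h0 h1
  have hβmem : (⇑β : V → k) ∈ PolyFun k V := Algebra.subset_adjoin ⟨β, rfl⟩
  -- smul is multiplication by the inclusion
  have hsmul : ∀ (g : ↥(InvPolyFun k ⇑s)) (p : ↥(PolyFun k V)),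
      g • p = Subalgebra.inclusion (invPolyFun_le k ⇑s) g * p := fun _ _ => rfl
  have hsmulmul : ∀ (g : ↥(InvPolyFun k ⇑s)) (p q : ↥(PolyFun k V)),
      (g • p) * q = g • (p * q) :=
    fun g p q => mul_assoc _ p q
  have hmulsmul : ∀ (g : ↥(InvPolyFun k ⇑s)) (p q : ↥(PolyFun k V)),
      p * (g • q) = g • (p * q) :=
    fun g p q => mul_left_comm p _ q
  -- γ = β²  is invariant
  set γ : ↥(InvPolyFun k ⇑s) := ⟨⇑β * ⇑β, ⟨mul_mem hβmem hβmem, fun v => by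
    simp [hsβ v]⟩⟩ with hγ
  have hββ : b 1 * b 1 = γ • b 0 := by
    rw [hb0, hb1, hsmul, mul_one]
    rfl
  -- decomposition of any element
  have expand : ∀ p : ↥(PolyFun k V), p = b.repr p 0 • b 0 + b.repr p 1 • b 1 := by
    intro p
    have := b.sum_repr p
    rw [Fin.sum_univ_two] at this
    exact this.symm
  -- coordinates of b 1 * x
  have hx1 : ∀ x : ↥(PolyFun k V),
      b 1 * x = (b.repr x 1 * γ) • b 0 + b.repr x 0 • b 1 := by
    intro x
    conv_lhs => rw [expand x]
    rw [mul_add, hmulsmul, hmulsmul, hββ, smul_smul, hb0, mul_one, add_comm]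
  have hrepr0 : ∀ x : ↥(PolyFun k V), b.repr (b 1 * x) 0 = b.repr x 1 * γ := by
    intro x; rw [hx1 x]; simp
  have hrepr1 : ∀ x : ↥(PolyFun k V), b.repr (b 1 * x) 1 = b.repr x 0 := by
    intro x; rw [hx1 x]; simp
  -- key identity on basis elements
  have key2 : ∀ (i j : Fin 2) (x : ↥(PolyFun k V)),
      Φ (b i * b j) x = Φ (b j) (b i * x) := by
    intro i j x
    fin_cases i
    · show Φ (b 0 * b j) x = Φ (b j) (b 0 * x)
      rw [hb0, one_mul, one_mul]
    · fin_cases j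
      · show Φ (b 1 * b 0) x = Φ (b 0) (b 1 * x)
        rw [h0, hb0, mul_one, h1, Module.Basis.dualBasis_apply, Module.Basis.dualBasis_apply,
          hrepr1 x]
      · show Φ (b 1 * b 1) x = Φ (b 1) (b 1 * x)
        rw [hββ, map_smul, h0, h1, LinearMap.smul_apply, Module.Basis.dualBasis_apply,
          Module.Basis.dualBasis_apply, hrepr0 x, smul_eq_mul, mul_comm]
  -- bijectivity
  have hΦeq : Φ = (b.equiv (b.dualBasis.reindex (Equiv.swap 0 1))
      (Equiv.refl (Fin 2)) : _ →ₗ[↥(InvPolyFun k ⇑s)] _) := by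
    apply b.ext
    intro i
    fin_cases i <;>
      simp [h0, h1, Module.Basis.equiv_apply, Equiv.swap_apply_left, Equiv.swap_apply_right]
  have hbij : Function.Bijective Φ := by
    rw [hΦeq]; exact (b.equiv _ _).bijective
  refine ⟨hbij, ?_, ?_⟩
  · intro p q x
    obtain ⟨p0, p1, hp⟩ : ∃ p0 p1, p = p0 • b 0 + p1 • b 1 := ⟨_, _, expand p⟩
    obtain ⟨q0, q1, hq⟩ : ∃ q0 q1, q = q0 • b 0 + q1 • b 1 := ⟨_, _, expand q⟩
    rw [hp, hq]
    simp only [add_mul, mul_add, hsmulmul, hmulsmul, smul_smul, map_add, map_smul,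
      LinearMap.add_apply, LinearMap.smul_apply, smul_eq_mul, key2]
    ring
  · intro M _ _
    have hd : dualTensorHom ↥(InvPolyFun k ⇑s) ↥(PolyFun k V) M =
        (dualTensorHomEquivOfBasis (N := M) b).toLinearMap :=
      (dualTensorHomEquivOfBasis_toLinearMap b).symm
    have hr : LinearMap.rTensor M Φ =
        (LinearEquiv.rTensor M (LinearEquiv.ofBijective Φ hbij)).toLinearMap := rfl
    rw [hd, hr, ← LinearEquiv.coe_trans]
    exact LinearEquiv.bijective _
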